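/- Let A be a commutative ring, ϖ ∈ A, and let (R_i)_{i ∈ I} be a directed system of commutative A-algebras indexed by a directed partially ordered set, with transition homomorphisms f_{ij} : R_i → R_j for i ≤ j. Suppose that each R_i is Henselian along the ideal generated by the image of ϖ in R_i. Then the direct limit R = colim_i R_i is Henselian along the ideal generated by the image of ϖ in R. -/

import Mathlib

private lemma eval_map_apply' {R S : Type*} [CommRing R] [CommRing S] (φ : R →+* S)
    (p : Polynomial R) (x : R) : (p.map φ).eval (φ x) = φ (p.eval x) := by
  rw [Polynomial.eval_map, Polynomial.eval₂_at_apply]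

/-- Let `A` be a commutative ring, `ϖ ∈ A`, and let `(G i)` be a directed system of commutative
`A`-algebras over a directed partially ordered index set, with transition homomorphisms `f i j`.
If each `G i` is Henselian along the ideal generated by the image of `ϖ`, then the direct limit
is Henselian along the ideal generated by the image of `ϖ` (the image of `ϖ` being taken via
the structure map from any component `i₀`). -/
theorem statement6 {A : Type*} [CommRing A] (ϖ : A)
    {ι : Type*} [PartialOrder ι] [IsDirected ι (· ≤ ·)] [Nonempty ι]
    (G : ι → Type*) [∀ i, CommRing (G i)] [∀ i, Algebra A (G i)]
    (f : ∀ i j, i ≤ j → G i →+* G j)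
    (hfA : ∀ i j (hij : i ≤ j), (f i j hij).comp (algebraMap A (G i)) = algebraMap A (G j))
    [DirectedSystem G fun i j hij => f i j hij]
    (hHens : ∀ i, HenselianRing (G i) (Ideal.span {algebraMap A (G i) ϖ}))
    (i₀ : ι) :
    HenselianRing (Ring.DirectLimit G fun i j hij => f i j hij)
      (Ideal.span {Ring.DirectLimit.of G (fun i j hij => f i j hij) i₀
        (algebraMap A (G i₀) ϖ)}) := by
  classical
  set R := Ring.DirectLimit G fun i j hij => f i j hij with hR
  set of' : ∀ i, G i →+* R := fun i => Ring.DirectLimit.of G (fun i j hij => f i j hij) i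
    with hof
  -- transition maps send ϖ to ϖ
  have hfϖ : ∀ i j (hij : i ≤ j), f i j hij (algebraMap A (G i) ϖ) = algebraMap A (G j) ϖ :=
    fun i j hij => RingHom.congr_fun (hfA i j hij) ϖ
  -- the image of ϖ in the limit is independent of the component
  have hofϖ : ∀ i, of' i (algebraMap A (G i) ϖ) = of' i₀ (algebraMap A (G i₀) ϖ) := by
    intro i
    obtain ⟨k, hik, h0k⟩ := exists_ge_ge i i₀
    rw [← Ring.DirectLimit.of_f hik (algebraMap A (G i) ϖ),
      ← Ring.DirectLimit.of_f h0k (algebraMap A (G i₀) ϖ), hfϖ, hfϖ]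
  set π : R := of' i₀ (algebraMap A (G i₀) ϖ) with hπ
  set I : Ideal R := Ideal.span {π} with hI
  -- each ϖ_i is in the Jacobson radical of G i
  have hjac : ∀ i, algebraMap A (G i) ϖ ∈ Ideal.jacobson (⊥ : Ideal (G i)) :=
    fun i => (hHens i).jac (Ideal.mem_span_singleton_self _)
  constructor
  · -- Jacobson radical condition
    rw [Ideal.span_le, Set.singleton_subset_iff, SetLike.mem_coe, Ideal.mem_jacobson_bot]
    intro y
    obtain ⟨i, z, rfl⟩ := Ring.DirectLimit.exists_of y
    obtain ⟨k, hik, h0k⟩ := exists_ge_ge i i₀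
    have hz : (of' i : G i →+* R) z = of' k (f i k hik z) :=
      (Ring.DirectLimit.of_f hik z).symm
    have : π * of' i z + 1 = of' k (algebraMap A (G k) ϖ * f i k hik z + 1) := by
      rw [map_add, map_mul, map_one, hofϖ k, hz]
    rw [this]
    exact ((Ideal.mem_jacobson_bot.mp (hjac k)) (f i k hik z)).map (of' k)
  · -- Henselian lifting condition
    intro p hp a₀ ha₀ hd
    rcases subsingleton_or_nontrivial R with hsub | hnt
    · exact ⟨a₀, Subsingleton.elim _ _, by simpa using I.zero_mem⟩
    -- descend the polynomial, monically
    obtain ⟨i₁, q, hq⟩ := Ring.DirectLimit.Polynomial.exists_of p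
    obtain ⟨Q₁, hQ₁map, -, hQ₁monic⟩ :=
      Polynomial.lifts_and_degree_eq_and_monic ((Polynomial.mem_lifts p).mpr ⟨q, hq⟩) hp
    -- descend a₀
    obtain ⟨i₂, a, ha⟩ := Ring.DirectLimit.exists_of a₀
    -- descend witness of p.eval a₀ ∈ I
    rw [hI, Ideal.mem_span_singleton] at ha₀
    obtain ⟨r₀, hr₀⟩ := ha₀
    obtain ⟨i₃, r, hr⟩ := Ring.DirectLimit.exists_of r₀
    -- descend witness of invertibility of p'(a₀) mod I
    obtain ⟨v, hv⟩ := hd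
    obtain ⟨u₀, hu₀⟩ := Ideal.Quotient.mk_surjective ((↑v⁻¹ : R ⧸ I))
    have hmk : Ideal.Quotient.mk I (Polynomial.eval a₀ (Polynomial.derivative p) * u₀) = 1 := by
      rw [(Ideal.Quotient.mk I).map_mul, ← hv, hu₀, Units.mul_inv]
    have hmem : Polynomial.eval a₀ (Polynomial.derivative p) * u₀ - 1 ∈ I :=
      Ideal.Quotient.eq.mp (by rw [hmk, (Ideal.Quotient.mk I).map_one])
    rw [hI, Ideal.mem_span_singleton] at hmem
    obtain ⟨s₀, hs₀⟩ := hmem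
    obtain ⟨i₄, s, hs⟩ := Ring.DirectLimit.exists_of s₀
    obtain ⟨i₅, u, hu⟩ := Ring.DirectLimit.exists_of u₀
    -- common index k
    obtain ⟨k₁, h₁, h₂⟩ := exists_ge_ge i₁ i₂
    obtain ⟨k₂, h₃, h₄⟩ := exists_ge_ge k₁ i₃
    obtain ⟨k₃, h₅, h₆⟩ := exists_ge_ge k₂ i₄
    obtain ⟨k, h₇, h₈⟩ := exists_ge_ge k₃ i₅
    have hk₁ : i₁ ≤ k := (h₁.trans h₃).trans (h₅.trans h₇)
    have hk₂ : i₂ ≤ k := (h₂.trans h₃).trans (h₅.trans h₇)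
    have hk₃ : i₃ ≤ k := h₄.trans (h₅.trans h₇)
    have hk₄ : i₄ ≤ k := h₆.trans h₇
    have hk₅ : i₅ ≤ k := h₈
    set Qk : Polynomial (G k) := Q₁.map (f i₁ k hk₁) with hQk
    set ak : G k := f i₂ k hk₂ a with hak
    set rk : G k := f i₃ k hk₃ r with hrk
    set sk : G k := f i₄ k hk₄ s with hsk
    set uk : G k := f i₅ k hk₅ u with huk
    have hofak : of' k ak = a₀ := by rw [hak, Ring.DirectLimit.of_f, ha]
    have hofrk : of' k rk = r₀ := by rw [hrk, Ring.DirectLimit.of_f, hr]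
    have hofsk : of' k sk = s₀ := by rw [hsk, Ring.DirectLimit.of_f, hs]
    have hofuk : of' k uk = u₀ := by rw [huk, Ring.DirectLimit.of_f, hu]
    have hcomp : (of' k).comp (f i₁ k hk₁) = of' i₁ := by
      ext x; exact Ring.DirectLimit.of_f hk₁ x
    have hQkmap : Qk.map (of' k) = p := by
      rw [hQk, Polynomial.map_map, hcomp, hQ₁map]
    have hQkmonic : Qk.Monic := hQ₁monic.map _
    -- the two relations hold in the limit, hence in some G l
    have E1 : of' k (Qk.eval ak - algebraMap A (G k) ϖ * rk) = 0 := by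
      rw [map_sub, map_mul, hofϖ k, hofrk, ← eval_map_apply' (of' k) Qk ak, hQkmap, hofak]
      linear_combination hr₀
    have E2 : of' k (Polynomial.eval ak (Polynomial.derivative Qk) * uk
        - (1 + algebraMap A (G k) ϖ * sk)) = 0 := by
      have hder : (Polynomial.derivative Qk).map (of' k) = Polynomial.derivative p := by
        rw [← hQkmap]; exact (Polynomial.derivative_map Qk (of' k)).symm
      rw [map_sub, map_mul, map_add, map_one, map_mul, hofϖ k, hofsk, hofuk,
        ← eval_map_apply' (of' k) (Polynomial.derivative Qk) ak, hder, hofak]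
      linear_combination hs₀
    obtain ⟨l₁, hkl₁, hE1⟩ := Ring.DirectLimit.of.zero_exact E1
    obtain ⟨l₂, hkl₂, hE2⟩ := Ring.DirectLimit.of.zero_exact E2
    obtain ⟨l, hl₁, hl₂⟩ := exists_ge_ge l₁ l₂
    have hkl : k ≤ l := hkl₁.trans hl₁
    have hE1' : f k l hkl (Qk.eval ak - algebraMap A (G k) ϖ * rk) = 0 := by
      rw [← DirectedSystem.map_map (f := fun i j hij => f i j hij) hkl₁ hl₁, hE1, map_zero]
    have hE2' : f k l hkl (Polynomial.eval ak (Polynomial.derivative Qk) * uk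
        - (1 + algebraMap A (G k) ϖ * sk)) = 0 := by
      rw [← DirectedSystem.map_map (f := fun i j hij => f i j hij) hkl₂ hl₂, hE2, map_zero]
    set φ : G k →+* G l := f k l hkl with hφ
    set Ql : Polynomial (G l) := Qk.map φ with hQl
    set al : G l := φ ak with hal
    set Il : Ideal (G l) := Ideal.span {algebraMap A (G l) ϖ} with hIl
    have h1 : Ql.eval al = algebraMap A (G l) ϖ * φ rk := by
      rw [map_sub, map_mul, hfϖ] at hE1'
      have := sub_eq_zero.mp hE1'
      rw [hQl, hal, eval_map_apply', this]
    have h2 : Polynomial.eval al (Polynomial.derivative Ql) * φ uk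
        = 1 + algebraMap A (G l) ϖ * φ sk := by
      rw [map_sub, map_mul, map_add, map_one, map_mul, hfϖ] at hE2'
      have := sub_eq_zero.mp hE2'
      rw [hQl, hal, Polynomial.derivative_map, eval_map_apply', this]
    have hmem1 : Ql.eval al ∈ Il := by
      rw [hIl, Ideal.mem_span_singleton]; exact ⟨φ rk, h1⟩
    have hunit : IsUnit (Ideal.Quotient.mk Il (Polynomial.eval al (Polynomial.derivative Ql))) := by
      apply IsUnit.of_mul_eq_one (Ideal.Quotient.mk Il (φ uk))
      rw [← map_mul, h2, map_add, map_one]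
      have : Ideal.Quotient.mk Il (algebraMap A (G l) ϖ * φ sk) = 0 := by
        rw [Ideal.Quotient.eq_zero_iff_mem]
        exact Ideal.mul_mem_right _ _ (Ideal.mem_span_singleton_self _)
      rw [this, add_zero]
    obtain ⟨b, hroot, hb⟩ := (hHens l).is_henselian Ql (hQkmonic.map φ) al hmem1 hunit
    rw [Ideal.mem_span_singleton] at hb
    obtain ⟨t, ht⟩ := hb
    refine ⟨of' l b, ?_, ?_⟩
    · -- root
      have hcompl : (of' l).comp φ = of' k := by
        ext x; exact Ring.DirectLimit.of_f hkl x
      have hQlmap : Ql.map (of' l) = p := by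
        rw [hQl, Polynomial.map_map, hcompl, hQkmap]
      have : p.eval (of' l b) = of' l (Ql.eval b) := by
        rw [← hQlmap, eval_map_apply']
      rw [Polynomial.IsRoot, this, hroot, map_zero]
    · -- congruence
      have hofal : of' l al = a₀ := by
        rw [hal, hφ, Ring.DirectLimit.of_f, hofak]
      have : of' l b - a₀ = π * of' l t := by
        rw [← hofal, ← map_sub, ht, map_mul, hofϖ l]
      rw [hI, Ideal.mem_span_singleton]
      exact ⟨of' l t, this⟩
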